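/- Let g ∈ ℤ[x] be a monic squarefree polynomial with g(0) ≠ 0 and deg(g) ≥ 1, and suppose there is a positive integer N₀ such that for every prime p ≥ N₀ and every prime q, q ∣ g(p) implies q ∣ g(p^p). Then there exists a positive integer M such that g(x) divides x^M − 1 in ℤ[x]. -/

import Mathlib

open Polynomial

theorem tot_odd : ∀ d : ℕ, Odd d → d ≤ d.totient ^ 2 := by
  intro d
  induction d using Nat.recOnPosPrimePosCoprime with
  | prime_pow p n hp hn =>
      intro hodd
      have hpp : p.Prime := hp
      have hpodd : ¬ Even p := by
        intro he
        exact (Nat.not_even_iff_odd.mpr hodd) ((Nat.even_pow' hn.ne').mpr he)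
      have hp3 : 3 ≤ p := by
        have h2 := hpp.two_le
        rcases Nat.lt_or_ge p 3 with h | h
        · interval_cases p
          · exact absurd (by decide) hpodd
        · exact h
      rw [Nat.totient_prime_pow hpp hn]
      obtain ⟨b, hb⟩ : ∃ b, p = b + 1 := ⟨p - 1, by omega⟩
      have hb2 : 2 ≤ b := by omega
      have ha1 : 1 ≤ p ^ (n - 1) := Nat.one_le_pow _ _ hpp.pos
      have hpn : p ^ n = p ^ (n - 1) * p := by
        rw [← pow_succ]; congr 1; omega
      rw [hpn, hb]
      have hbb : b + 1 - 1 = b := by omega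
      rw [hbb]
      set a := (b+1) ^ (n-1) with ha
      have ha1' : 1 ≤ a := by rw [ha]; exact Nat.one_le_pow _ _ (by omega)
      calc a * (b+1) ≤ a * b^2 := Nat.mul_le_mul_left _ (by nlinarith)
        _ ≤ a^2 * b^2 := Nat.mul_le_mul_right _ (Nat.le_self_pow (by norm_num) _)
        _ = (a*b)^2 := by ring
  | zero => intro h; simp at h
  | one => intro _; simp
  | coprime a b ha hb hcop iha ihb =>
      intro hodd
      obtain ⟨hoa, hob⟩ := (Nat.odd_mul).mp hodd
      rw [Nat.totient_mul hcop, mul_pow]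
      exact Nat.mul_le_mul (iha hoa) (ihb hob)

theorem tot_bound : ∀ d : ℕ, d ≤ 2 * d.totient ^ 2 := by
  intro d
  induction d using Nat.recOnPosPrimePosCoprime with
  | prime_pow p n hp hn =>
      rcases hp.eq_two_or_odd' with rfl | ho
      · rw [Nat.totient_prime_pow hp hn]
        calc 2 ^ n ≤ 2 ^ (2 * n - 1) := Nat.pow_le_pow_right (by norm_num) (by omega)
          _ = 2 * (2 ^ (n-1) * (2-1)) ^ 2 := by
              norm_num
              rw [← pow_mul, ← pow_succ']
              congr 1
              omega
      · have : Odd (p ^ n) := ho.pow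
        have := tot_odd _ this
        omega
  | zero => simp
  | one => simp
  | coprime a b ha hb hcop iha ihb =>
      rw [Nat.totient_mul hcop, mul_pow]
      rcases Nat.even_or_odd a with hea | hoa
      · have hob : Odd b := by
          rcases Nat.even_or_odd b with heb | hob
          · exfalso
            have : (2:ℕ) ∣ Nat.gcd a b := Nat.dvd_gcd hea.two_dvd heb.two_dvd
            rw [hcop] at this
            omega
          · exact hob
        have h2 := tot_odd b hob
        calc a * b ≤ (2 * a.totient ^ 2) * (b.totient ^2) := Nat.mul_le_mul iha h2
          _ = 2 * (a.totient ^2 * b.totient ^2) := by ring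
      · have h1 := tot_odd a hoa
        calc a * b ≤ (a.totient ^ 2) * (2 * b.totient ^2) := Nat.mul_le_mul h1 ihb
          _ = 2 * (a.totient ^2 * b.totient ^2) := by ring

theorem unbounded_eval (f : Polynomial ℤ) (hf : 1 ≤ f.natDegree) (B : ℤ) :
    ∃ n : ℤ, B < |f.eval n| := by
  by_contra h
  push_neg at h
  have hfin : ∀ y : ℤ, {n : ℤ | f.eval n = y}.Finite := by
    intro y
    rcases Set.finite_or_infinite {n : ℤ | f.eval n = y} with hf' | hf'
    · exact hf'
    · exfalso
      have hz : f - Polynomial.C y = 0 := by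
        apply Polynomial.eq_zero_of_infinite_isRoot
        apply hf'.mono
        intro n hn
        simp only [Set.mem_setOf_eq] at hn ⊢
        simp [Polynomial.IsRoot, hn]
      have : f = Polynomial.C y := by rwa [sub_eq_zero] at hz
      rw [this, Polynomial.natDegree_C] at hf
      omega
  have hsub : (Set.univ : Set ℤ) ⊆ ⋃ y ∈ Set.Icc (-B) B, {n : ℤ | f.eval n = y} := by
    intro n _
    have := abs_le.mp (h n)
    exact Set.mem_biUnion (Set.mem_Icc.mpr ⟨this.1, this.2⟩) rfl
  exact Set.infinite_univ (Set.Finite.subset ((Set.finite_Icc _ _).biUnion fun y _ => hfin y) hsub)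

theorem schur (f : Polynomial ℤ) (hf : 1 ≤ f.natDegree) (h0 : f.eval 0 ≠ 0) (K : ℕ) :
    ∃ q : ℕ, q.Prime ∧ K < q ∧ ∃ m : ℤ, (q : ℤ) ∣ f.eval m := by
  set c : ℤ := f.eval 0 with hc
  set m0 : ℤ := c * (K.factorial : ℤ) with hm0
  have hm0ne : m0 ≠ 0 := by
    apply mul_ne_zero h0
    exact_mod_cast K.factorial_ne_zero
  have key : ∀ t : ℤ, ∃ u : ℤ, f.eval (m0 * t) = c * (1 + (K.factorial : ℤ) * t * u) := by
    intro t
    have hdvd : (m0 * t - 0) ∣ f.eval (m0 * t) - f.eval 0 := Polynomial.sub_dvd_eval_sub _ _ f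
    rw [sub_zero] at hdvd
    obtain ⟨u, hu⟩ := hdvd
    refine ⟨u, ?_⟩
    have : f.eval (m0 * t) = c + m0 * t * u := by omega
    rw [this, hm0]
    ring
  -- growth
  have hcomp : 1 ≤ (f.comp (C m0 * X)).natDegree := by
    rw [Polynomial.natDegree_comp]
    rw [Polynomial.natDegree_C_mul hm0ne, Polynomial.natDegree_X]
    omega
  obtain ⟨t, ht⟩ := unbounded_eval (f.comp (C m0 * X)) hcomp |c|
  rw [Polynomial.eval_comp, Polynomial.eval_mul, Polynomial.eval_C, Polynomial.eval_X] at ht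
  obtain ⟨u, hu⟩ := key t
  set w : ℤ := 1 + (K.factorial : ℤ) * t * u with hw
  have hw1 : 1 < |w| := by
    rw [hu, abs_mul] at ht
    nlinarith [abs_nonneg w, abs_nonneg c, abs_pos.mpr h0]
  have hwna : w.natAbs ≠ 1 := by
    rw [Int.abs_eq_natAbs] at hw1
    omega
  obtain ⟨q, hq, hqw⟩ := Nat.exists_prime_and_dvd hwna
  refine ⟨q, hq, ?_, m0 * t, ?_⟩
  · by_contra hKq
    push_neg at hKq
    have h1 : q ∣ K.factorial := Nat.dvd_factorial hq.pos hKq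
    have h2 : (q : ℤ) ∣ w := Int.dvd_natAbs.mp (Int.natCast_dvd_natCast.mpr hqw)
    have h3 : (q : ℤ) ∣ (1 : ℤ) := by
      have hd : (q : ℤ) ∣ (K.factorial : ℤ) * t * u := Dvd.dvd.mul_right (Dvd.dvd.mul_right (Int.natCast_dvd_natCast.mpr h1) t) u
      have he : w - (K.factorial : ℤ) * t * u = 1 := by rw [hw]; ring
      have := dvd_sub h2 hd
      rwa [he] at this
    have := Int.le_of_dvd one_pos h3
    have := hq.two_le
    omega
  · rw [hu]
    exact Dvd.dvd.mul_left (Int.dvd_natAbs.mp (Int.natCast_dvd_natCast.mpr hqw)) c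

theorem clear_denoms (a : Polynomial ℚ) :
    ∃ (N : ℤ) (A : Polynomial ℤ), N ≠ 0 ∧
      A.map (Int.castRingHom ℚ) = Polynomial.C (N : ℚ) * a := by
  induction a using Polynomial.induction_on' with
  | add p q hp hq =>
      obtain ⟨N, A, hN, hA⟩ := hp
      obtain ⟨M, B, hM, hB⟩ := hq
      refine ⟨N * M, Polynomial.C M * A + Polynomial.C N * B, mul_ne_zero hN hM, ?_⟩
      rw [Polynomial.map_add, Polynomial.map_mul, Polynomial.map_mul, hA, hB,
        Polynomial.map_C, Polynomial.map_C,
        show ((Int.castRingHom ℚ) M) = ((M : ℤ) : ℚ) from rfl,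
        show ((Int.castRingHom ℚ) N) = ((N : ℤ) : ℚ) from rfl]
      push_cast [Polynomial.C_mul]
      ring
  | monomial n r =>
      refine ⟨(r.den : ℤ), Polynomial.monomial n r.num, by exact_mod_cast r.den_ne_zero , ?_⟩
      rw [Polynomial.map_monomial, Polynomial.C_mul_monomial]
      congr 1
      show ((r.num : ℤ) : ℚ) = ((r.den : ℤ) : ℚ) * r
      push_cast
      rw [mul_comm]
      exact_mod_cast (Rat.mul_den_eq_num r).symm

theorem sqf_dvd {α : Type*} [CommMonoidWithZero α] [Nontrivial α]
    [UniqueFactorizationMonoid α] (h : α) : ∀ (g : α), Squarefree g → (∀ p, Prime p → p ∣ g → p ∣ h) → g ∣ h := by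
  intro g
  induction g using UniqueFactorizationMonoid.induction_on_prime with
  | h₁ =>
      intro hsf _
      exact absurd hsf not_squarefree_zero
  | h₂ x hx =>
      intro _ _
      exact hx.dvd
  | h₃ a p ha hp ih =>
      intro hsf hall
      have hpa : ¬ p ∣ a := by
        rintro ⟨a', rfl⟩
        exact hp.not_unit (hsf p ⟨a', (mul_assoc p p a').symm⟩)
      have hph : p ∣ h := hall p hp ⟨a, rfl⟩
      have hah : a ∣ h := ih (hsf.of_mul_right) fun r hr hra => hall r hr (hra.mul_left p)
      obtain ⟨k, hk⟩ := hah
      have hpk : p ∣ k := (hp.dvd_or_dvd (hk ▸ hph)).resolve_left hpa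
      obtain ⟨k', rfl⟩ := hpk
      exact ⟨k', by rw [hk, mul_left_comm, mul_assoc]⟩

theorem key_order (g : Polynomial ℤ) (hg : g.Monic) (N₀ : ℕ)
    (hdvd : ∀ p : ℕ, p.Prime → N₀ ≤ p → ∀ q : ℕ, q.Prime →
      (q : ℤ) ∣ g.eval (p : ℤ) → (q : ℤ) ∣ g.eval ((p : ℤ) ^ p))
    (q : ℕ) (hq : q.Prime) (r : ZMod q) (hr : r ≠ 0)
    (hroot : (g.map (Int.castRingHom (ZMod q))).eval r = 0) :
    ∃ d : ℕ, 0 < d ∧ d.totient ≤ g.natDegree ∧ r ^ d = 1 := by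
  haveI : Fact q.Prime := ⟨hq⟩
  haveI : NeZero (q - 1) := ⟨by have := hq.two_le; omega⟩
  haveI : NeZero (q * (q - 1)) := ⟨by have := hq.two_le; have : 0 < q * (q-1) := Nat.mul_pos (by omega) (by omega); omega⟩
  set gq := g.map (Int.castRingHom (ZMod q)) with hgq
  have hgqm : gq.Monic := hg.map _
  have hu : IsUnit r := Ne.isUnit hr
  set u : (ZMod q)ˣ := hu.unit with huu
  have hur : (u : ZMod q) = r := hu.unit_spec
  set d : ℕ := orderOf u with hd
  have hd0 : 0 < d := orderOf_pos u
  have hcop : Nat.Coprime q (q - 1) := by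
    have := hq.two_le
    exact (Nat.coprime_self_sub_right (by omega)).mpr (Nat.coprime_one_right q)
  have hdq : d ∣ q - 1 := by
    have h1 : Fintype.card (ZMod q)ˣ = q - 1 := by
      rw [ZMod.card_units_eq_totient, Nat.totient_prime hq]
    exact h1 ▸ orderOf_dvd_card
  -- evaluation helper
  have heval : ∀ z : ℤ, gq.eval ((z : ℤ) : ZMod q) = ((g.eval z : ℤ) : ZMod q) := by
    intro z
    rw [hgq, Polynomial.eval_map]
    exact Polynomial.eval₂_at_apply (Int.castRingHom (ZMod q)) z
  -- closure under coprime powers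
  have closure : ∀ e : ℕ, Nat.Coprime e (q - 1) → gq.eval ((u : ZMod q) ^ e) = 0 := by
    intro e he
    set crt := ZMod.chineseRemainder hcop with hcrt
    set a : ZMod (q * (q - 1)) := crt.symm (r, (e : ZMod (q - 1))) with ha
    have hau : IsUnit a := by
      apply IsUnit.map crt.symm.toRingHom
      have h1 : IsUnit ((r, (1 : ZMod (q-1))) * ((1 : ZMod q), (e : ZMod (q - 1)))) :=
        (hu.map (MonoidHom.inl (ZMod q) (ZMod (q-1)))).mul
          ((ZMod.unitOfCoprime e he).isUnit.map (MonoidHom.inr (ZMod q) (ZMod (q-1))))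
      simpa using h1
    obtain ⟨p, hpgt, hpp, hpc⟩ := Nat.forall_exists_prime_gt_and_eq_mod hau (max N₀ q)
    have hcrtp : crt ((p : ℕ) : ZMod (q * (q - 1))) = ((p : ZMod q), (p : ZMod (q - 1))) := by
      rw [map_natCast]
      rfl
    have hpq : (p : ZMod q) = r ∧ (p : ZMod (q - 1)) = (e : ZMod (q - 1)) := by
      have : crt a = (r, (e : ZMod (q - 1))) := by rw [ha]; exact crt.apply_symm_apply _
      rw [← hpc, hcrtp] at this
      exact ⟨congrArg Prod.fst this, congrArg Prod.snd this⟩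
    -- q ∣ g(p)
    have h1 : (q : ℤ) ∣ g.eval (p : ℤ) := by
      rw [← ZMod.intCast_zmod_eq_zero_iff_dvd]
      have := heval (p : ℤ)
      rw [show (((p : ℤ) : ℤ) : ZMod q) = (p : ZMod q) by push_cast; ring] at this
      rw [← this, hpq.1, hroot]
    have h2 : (q : ℤ) ∣ g.eval ((p : ℤ) ^ p) := hdvd p hpp (le_trans (le_max_left _ _) (le_of_lt hpgt)) q hq h1
    have h3 : gq.eval ((p : ZMod q) ^ p) = 0 := by
      have := heval ((p : ℤ) ^ p)
      rw [show ((((p : ℤ) ^ p : ℤ)) : ZMod q) = (p : ZMod q) ^ p by push_cast; ring] at this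
      rw [this, ZMod.intCast_zmod_eq_zero_iff_dvd]
      exact h2
    -- p ≡ e mod q-1 so r^p = r^e
    have h4 : u ^ p = u ^ e := by
      apply pow_eq_pow_iff_modEq.mpr
      apply Nat.ModEq.of_dvd hdq
      exact (ZMod.natCast_eq_natCast_iff _ _ _).mp hpq.2
    have h5 : (u : ZMod q) ^ e = (u : ZMod q) ^ p := by
      rw [← Units.val_pow_eq_pow_val, ← Units.val_pow_eq_pow_val, h4]
    rw [h5, hur, ← hpq.1]
    exact h3
  -- every j coprime to d gives a root u^j
  haveI : NeZero d := ⟨hd0.ne'⟩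
  have roots_j : ∀ j : ℕ, Nat.Coprime j d → gq.eval ((u : ZMod q) ^ j) = 0 := by
    intro j hj
    obtain ⟨E, hE⟩ := ZMod.unitsMap_surjective hdq (ZMod.unitOfCoprime j hj)
    set e : ℕ := ((E : ZMod (q - 1))).val with he_def
    have he : e.Coprime (q - 1) := ZMod.val_coe_unit_coprime E
    have h1 : ((e : ℕ) : ZMod (q - 1)) = (E : ZMod (q - 1)) := ZMod.natCast_rightInverse _
    have h2 : (ZMod.castHom hdq (ZMod d)) ((E : ZMod (q - 1))) = (j : ZMod d) := by
      have := congrArg (Units.val) hE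
      rw [ZMod.unitsMap_def, Units.coe_map, ZMod.coe_unitOfCoprime] at this
      exact this
    have heq : (e : ZMod d) = (j : ZMod d) := by
      rw [← map_natCast (ZMod.castHom hdq (ZMod d)) e, h1, h2]
    have h6 : u ^ e = u ^ j := by
      apply pow_eq_pow_iff_modEq.mpr
      rw [← hd]
      exact (ZMod.natCast_eq_natCast_iff _ _ _).mp heq
    have := closure e he
    rwa [← Units.val_pow_eq_pow_val, h6, Units.val_pow_eq_pow_val] at this
  -- counting
  have hcard : d.totient ≤ g.natDegree := by
    have hne : gq ≠ 0 := hgqm.ne_zero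
    have hmem : ∀ j ∈ (Finset.range d).filter d.Coprime,
        (u : ZMod q) ^ j ∈ gq.roots.toFinset := by
      intro j hjmem
      rw [Finset.mem_filter] at hjmem
      rw [Multiset.mem_toFinset, Polynomial.mem_roots']
      exact ⟨hne, roots_j j hjmem.2.symm⟩
    have hinj : Set.InjOn (fun j : ℕ => (u : ZMod q) ^ j)
        ((Finset.range d).filter d.Coprime : Finset ℕ) := by
      intro j1 h1m j2 h2m hEq
      simp only [Finset.coe_filter, Set.mem_setOf_eq, Finset.mem_range] at h1m h2m
      have hu12 : u ^ j1 = u ^ j2 := by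
        apply Units.ext
        rw [Units.val_pow_eq_pow_val, Units.val_pow_eq_pow_val]
        exact hEq
      exact pow_injOn_Iio_orderOf (Set.mem_Iio.mpr h1m.1) (Set.mem_Iio.mpr h2m.1) hu12
    have hle := Finset.card_le_card_of_injOn _ hmem hinj
    have h7 : ((Finset.range d).filter d.Coprime).card = d.totient :=
      (Nat.totient_eq_card_coprime d).symm
    have h8 : gq.roots.toFinset.card ≤ Multiset.card gq.roots := Multiset.toFinset_card_le _
    have h9 : Multiset.card gq.roots ≤ gq.natDegree := Polynomial.card_roots' gq
    have h10 : gq.natDegree = g.natDegree := hg.natDegree_map _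
    omega
  refine ⟨d, hd0, hcard, ?_⟩
  rw [← hur, ← Units.val_pow_eq_pow_val, show u ^ d = 1 from pow_orderOf_eq_one u, Units.val_one]

theorem main_factor (g : Polynomial ℤ) (hg : g.Monic) (hg0 : g.eval 0 ≠ 0) (N₀ : ℕ)
    (hdvd : ∀ p : ℕ, p.Prime → N₀ ≤ p → ∀ q : ℕ, q.Prime →
      (q : ℤ) ∣ g.eval (p : ℤ) → (q : ℤ) ∣ g.eval ((p : ℤ) ^ p))
    (f : Polynomial ℤ) (hfm : f.Monic) (hirr : Irreducible f) (hfg : f ∣ g) :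
    f ∣ (X ^ (2 * g.natDegree ^ 2).factorial - 1 : Polynomial ℤ) := by
  set n := g.natDegree with hn
  set M := (2 * n ^ 2).factorial with hM
  have hfdeg : 1 ≤ f.natDegree := by
    by_contra hc
    push_neg at hc
    have h0 : f.natDegree = 0 := by omega
    have : f = 1 := (Polynomial.Monic.natDegree_eq_zero hfm).mp h0
    exact hirr.not_isUnit (this ▸ isUnit_one)
  have hf0 : f.eval 0 ≠ 0 := by
    obtain ⟨h, hh⟩ := hfg
    intro hzero
    apply hg0
    rw [hh, Polynomial.eval_mul, hzero, zero_mul]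
  -- key: for every large prime q with a root of f, we get q ∣ f(m) and q ∣ m^M - 1
  have key : ∀ q : ℕ, q.Prime → (g.eval 0).natAbs < q →
      ∀ m : ℤ, (q : ℤ) ∣ f.eval m → (q : ℤ) ∣ m ^ M - 1 := by
    intro q hq hqgt m hm
    haveI : Fact q.Prime := ⟨hq⟩
    set r : ZMod q := ((m : ℤ) : ZMod q) with hrdef
    have heval : ∀ (F : Polynomial ℤ) (z : ℤ),
        (F.map (Int.castRingHom (ZMod q))).eval ((z : ℤ) : ZMod q) = ((F.eval z : ℤ) : ZMod q) := by
      intro F z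
      rw [Polynomial.eval_map]
      exact Polynomial.eval₂_at_apply (Int.castRingHom (ZMod q)) z
    have hrootf : (f.map (Int.castRingHom (ZMod q))).eval r = 0 := by
      rw [hrdef, heval f m, ZMod.intCast_zmod_eq_zero_iff_dvd]
      exact hm
    have hrootg : (g.map (Int.castRingHom (ZMod q))).eval r = 0 := by
      obtain ⟨h, hh⟩ := hfg
      rw [hh, Polynomial.map_mul, Polynomial.eval_mul, hrootf, zero_mul]
    have hr : r ≠ 0 := by
      intro h0
      have h1 : ((g.eval 0 : ℤ) : ZMod q) = 0 := by
        rw [← heval g 0]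
        rw [h0] at hrootg
        simpa using hrootg
      have h2 : (q : ℤ) ∣ g.eval 0 := (ZMod.intCast_zmod_eq_zero_iff_dvd _ _).mp h1
      have h3 : (q : ℤ) ≤ |g.eval 0| := Int.le_of_dvd (abs_pos.mpr hg0) ((dvd_abs _ _).mpr h2)
      rw [Int.abs_eq_natAbs] at h3
      exact_mod_cast absurd h3 (by exact_mod_cast Nat.not_le.mpr hqgt)
    obtain ⟨d, hd0, hdtot, hrd⟩ := key_order g hg N₀ hdvd q hq r hr hrootg
    have hdle : d ≤ 2 * n ^ 2 := by
      have h1 := tot_bound d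
      have h2 : d.totient ^ 2 ≤ n ^ 2 := Nat.pow_le_pow_left hdtot 2
      omega
    have hdM : d ∣ M := Nat.dvd_factorial hd0 hdle
    obtain ⟨k, hk⟩ := hdM
    have hrM : r ^ M = 1 := by rw [hk, pow_mul, hrd, one_pow]
    have : ((m ^ M - 1 : ℤ) : ZMod q) = 0 := by
      push_cast
      rw [← hrdef, hrM]
      ring
    exact (ZMod.intCast_zmod_eq_zero_iff_dvd _ _).mp this
  -- Bezout argument
  by_contra hnd
  have hndQ : ¬ (f.map (Int.castRingHom ℚ)) ∣ (X ^ M - 1 : Polynomial ℚ) := by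
    intro hdq
    apply hnd
    rw [← Polynomial.map_dvd_map (Int.castRingHom ℚ) (fun a b h => Int.cast_injective h) hfm]
    rwa [Polynomial.map_sub, Polynomial.map_pow, Polynomial.map_X, Polynomial.map_one]
  have hirrQ : Irreducible (f.map (Int.castRingHom ℚ)) := by
    have := (Polynomial.Monic.irreducible_iff_irreducible_map_fraction_map hfm (K := ℚ)).mp hirr
    convert this using 2
    exacts [rfl, rfl, (algebraMap_int_eq ℚ).symm]
  have hco : IsCoprime (f.map (Int.castRingHom ℚ)) (X ^ M - 1 : Polynomial ℚ) :=
    (hirrQ.isCoprime_or_dvd _).resolve_right hndQ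
  obtain ⟨A', B', hAB⟩ := hco
  obtain ⟨NA, A, hNA, hA⟩ := clear_denoms A'
  obtain ⟨NB, B, hNB, hB⟩ := clear_denoms B'
  set c : ℤ := NA * NB with hc
  have hcne : c ≠ 0 := mul_ne_zero hNA hNB
  -- integer Bezout identity evaluated at any m
  have intbez : ∀ m : ℤ, NB * (A.eval m) * (f.eval m) + NA * (B.eval m) * (m ^ M - 1) = c := by
    intro m
    have := congrArg (Polynomial.eval (m : ℚ)) hAB
    rw [Polynomial.eval_add, Polynomial.eval_mul, Polynomial.eval_mul, Polynomial.eval_one] at this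
    apply (Int.cast_injective (α := ℚ))
    have hevalQ : ∀ (F : Polynomial ℤ) (z : ℤ),
        (F.map (Int.castRingHom ℚ)).eval ((z : ℤ) : ℚ) = ((F.eval z : ℤ) : ℚ) := by
      intro F z
      rw [Polynomial.eval_map]
      exact Polynomial.eval₂_at_apply (Int.castRingHom ℚ) z
    have hAm : ((A.eval m : ℤ) : ℚ) = (NA : ℚ) * A'.eval (m : ℚ) := by
      rw [← hevalQ A m, hA, Polynomial.eval_mul, Polynomial.eval_C]
    have hBm : ((B.eval m : ℤ) : ℚ) = (NB : ℚ) * B'.eval (m : ℚ) := by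
      rw [← hevalQ B m, hB, Polynomial.eval_mul, Polynomial.eval_C]
    have hfm' : ((f.eval m : ℤ) : ℚ) = (f.map (Int.castRingHom ℚ)).eval (m : ℚ) :=
      (hevalQ f m).symm
    have hXM : ((X ^ M - 1 : Polynomial ℚ)).eval (m : ℚ) = (m : ℚ) ^ M - 1 := by
      rw [Polynomial.eval_sub, Polynomial.eval_pow, Polynomial.eval_X, Polynomial.eval_one]
    rw [hXM] at this
    push_cast
    rw [hAm, hBm, hfm', hc]
    push_cast
    linear_combination ((NA : ℚ) * (NB : ℚ)) * this
  -- choose a large prime q dividing some value of f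
  obtain ⟨q, hq, hqgt, m, hqm⟩ := schur f hfdeg hf0 (max (g.eval 0).natAbs c.natAbs)
  have h1 : (q : ℤ) ∣ m ^ M - 1 := key q hq (lt_of_le_of_lt (le_max_left _ _) hqgt) m hqm
  have h2 : (q : ℤ) ∣ c := by
    have h5 := intbez m
    have d1 : (q : ℤ) ∣ NB * (A.eval m) * (f.eval m) := Dvd.dvd.mul_left hqm _
    have d2 : (q : ℤ) ∣ NA * (B.eval m) * (m ^ M - 1) := Dvd.dvd.mul_left h1 _
    have d3 : (q : ℤ) ∣ NB * eval m A * eval m f + NA * eval m B * (m ^ M - 1) := dvd_add d1 d2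
    rwa [h5] at d3
  have h3 : (q : ℤ) ≤ |c| := Int.le_of_dvd (abs_pos.mpr hcne) ((dvd_abs _ _).mpr h2)
  rw [Int.abs_eq_natAbs] at h3
  have h4 : c.natAbs < q := lt_of_le_of_lt (le_max_right _ _) hqgt
  exact_mod_cast absurd h3 (by exact_mod_cast Nat.not_le.mpr h4)

/-- **Lemma 5.2.** Let `g ∈ ℤ[x]` be monic and squarefree with `g(0) ≠ 0` and
`deg g ≥ 1`, and suppose there is a positive integer `N₀` such that for every prime `p ≥ N₀`
and every prime `q`, `q ∣ g(p)` implies `q ∣ g(p^p)`. Then `g(x) ∣ x^M - 1` for some positive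
integer `M`. -/
theorem stmt_12 (g : Polynomial ℤ) (hg : g.Monic) (hsf : Squarefree g)
    (hg0 : g.eval 0 ≠ 0) (hdeg : 1 ≤ g.natDegree) (N₀ : ℕ) (hN₀ : 0 < N₀)
    (hdvd : ∀ p : ℕ, p.Prime → N₀ ≤ p → ∀ q : ℕ, q.Prime →
      (q : ℤ) ∣ g.eval (p : ℤ) → (q : ℤ) ∣ g.eval ((p : ℤ) ^ p)) :
    ∃ M : ℕ, 0 < M ∧ g ∣ (X ^ M - 1 : Polynomial ℤ) := by
  refine ⟨(2 * g.natDegree ^ 2).factorial, Nat.factorial_pos _, ?_⟩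
  apply sqf_dvd _ g hsf
  intro p hp hpg
  have hlc : IsUnit p.leadingCoeff := by
    obtain ⟨h, hh⟩ := hpg
    have h1 : p.leadingCoeff * h.leadingCoeff = 1 := by
      rw [← Polynomial.leadingCoeff_mul, ← hh, hg.leadingCoeff]
    exact IsUnit.of_mul_eq_one _ h1
  rcases Int.isUnit_iff.mp hlc with h1 | h1
  · exact main_factor g hg hg0 N₀ hdvd p h1 hp.irreducible hpg
  · have hmon : (-p).Monic := by
      rw [Polynomial.Monic, Polynomial.leadingCoeff_neg, h1, neg_neg]
    have hassoc : Associated p (-p) := ⟨-1, by simp⟩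
    have hirr : Irreducible (-p) := hassoc.irreducible hp.irreducible
    have hdvd' : (-p) ∣ g := (neg_dvd).mpr hpg
    have := main_factor g hg hg0 N₀ hdvd (-p) hmon hirr hdvd'
    exact (neg_dvd).mp this
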